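/- arXiv:2504.18098 — 2 statements merged into one kernel-verified Lean document; each statement's English description precedes it below -/
import Mathlib

section
/- The logarithm of the filtered stabilizer norm lower-bounds the log-free robustness of magic: for every n-qubit state ρ with ρ ≠ I/2^n that admits at least one finite real decomposition into pure stabilizer projectors, ln D̃(ρ) ≤ LR(ρ). -/
open Matrix Complex BigOperators
open scoped ComplexOrder

noncomputable section

/-- Index type for `n` qubits: functions `Fin n → Fin 2` (cardinality `2^n`). -/
abbrev QIdx (n : ℕ) := Fin n → Fin 2

/-- The four single-qubit Pauli matrices: `σ⁰ = I`, `σ¹ = σˣ`, `σ² = σᶻ`, `σ³ = σʸ`. -/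
def pauliMat : Fin 4 → Matrix (Fin 2) (Fin 2) ℂ
  | 0 => 1
  | 1 => !![0, 1; 1, 0]
  | 2 => !![1, 0; 0, -1]
  | 3 => !![0, -Complex.I; Complex.I, 0]

/-- The Pauli string `σ^{a_1} ⊗ ⋯ ⊗ σ^{a_n}` as a `2^n × 2^n` matrix. -/
def pauliString {n : ℕ} (a : Fin n → Fin 4) : Matrix (QIdx n) (QIdx n) ℂ :=
  fun i j => ∏ k, pauliMat (a k) (i k) (j k)

/-- An `n`-qubit state: positive semidefinite with unit trace. -/
def IsState {n : ℕ} (ρ : Matrix (QIdx n) (QIdx n) ℂ) : Prop :=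
  ρ.PosSemidef ∧ ρ.trace = 1

/-- The `α`-moment of the Pauli spectrum `A_α(ρ) = 2^{-n} ∑_P |tr(ρP)|^{2α}`. -/
def Amom {n : ℕ} (α : ℝ) (ρ : Matrix (QIdx n) (QIdx n) ℂ) : ℝ :=
  ((2:ℝ)^n)⁻¹ * ∑ a : Fin n → Fin 4, ‖(ρ * pauliString a).trace‖ ^ (2 * α)

/-- The 2-Rényi entropy `S₂(ρ) = -ln tr(ρ²)`. -/
def S2 {n : ℕ} (ρ : Matrix (QIdx n) (QIdx n) ℂ) : ℝ :=
  - Real.log ((ρ * ρ).trace.re)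

/-- The magic witness `W_α(ρ) = (1/(1-α)) ln A_α(ρ) - ((1-2α)/(1-α)) S₂(ρ)`. -/
def Wit {n : ℕ} (α : ℝ) (ρ : Matrix (QIdx n) (QIdx n) ℂ) : ℝ :=
  (1 / (1 - α)) * Real.log (Amom α ρ) - ((1 - 2*α)/(1 - α)) * S2 ρ

/-- The stabilizer norm `D(ρ) = A_{1/2}(ρ) = 2^{-n} ∑_P |tr(ρP)|`. -/
def Dnorm {n : ℕ} (ρ : Matrix (QIdx n) (QIdx n) ℂ) : ℝ :=
  Amom (1/2) ρ

/-- A Clifford unitary: unitary mapping every Pauli string to `±` a Pauli string. -/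
def IsCliffordUnitary {n : ℕ} (U : Matrix (QIdx n) (QIdx n) ℂ) : Prop :=
  U ∈ Matrix.unitaryGroup (QIdx n) ℂ ∧
    ∀ a : Fin n → Fin 4, ∃ (b : Fin n → Fin 4) (ε : ℝ),
      (ε = 1 ∨ ε = -1) ∧ U * pauliString a * Uᴴ = (ε : ℂ) • pauliString b

/-- The computational all-zeros basis vector `|0⟩^{⊗n}`. -/
def zeroVec (n : ℕ) : QIdx n → ℂ :=
  fun i => if (∀ k, i k = 0) then 1 else 0

/-- A pure stabilizer state vector: `U|0⟩^{⊗n}` for a Clifford unitary `U`. -/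
def IsPureStab {n : ℕ} (ψ : QIdx n → ℂ) : Prop :=
  ∃ U, IsCliffordUnitary U ∧ ψ = U.mulVec (zeroVec n)

/-- The rank-one projector `|ψ⟩⟨ψ|`. -/
def proj {n : ℕ} (ψ : QIdx n → ℂ) : Matrix (QIdx n) (QIdx n) ℂ :=
  Matrix.vecMulVec ψ (star ψ)

/-- A mixed stabilizer state: a finite convex combination of pure stabilizer projectors. -/
def IsMixedStab {n : ℕ} (ρ : Matrix (QIdx n) (QIdx n) ℂ) : Prop :=
  ∃ (k : ℕ) (p : Fin k → ℝ) (ψ : Fin k → QIdx n → ℂ),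
    (∀ i, 0 ≤ p i) ∧ (∑ i, p i = 1) ∧ (∀ i, IsPureStab (ψ i)) ∧
    ρ = ∑ i, (p i : ℂ) • proj (ψ i)

/-- The set of values `ln ∑ᵢ |xᵢ|` over finite real stabilizer decompositions of `ρ`. -/
def StabDecomps {n : ℕ} (ρ : Matrix (QIdx n) (QIdx n) ℂ) : Set ℝ :=
  { r | ∃ (k : ℕ) (x : Fin k → ℝ) (ψ : Fin k → QIdx n → ℂ),
      (∀ i, IsPureStab (ψ i)) ∧ ρ = ∑ i, (x i : ℂ) • proj (ψ i) ∧
      r = Real.log (∑ i, |x i|) }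

/-- The log-free robustness of magic. -/
def LR {n : ℕ} (ρ : Matrix (QIdx n) (QIdx n) ℂ) : ℝ := sInf (StabDecomps ρ)

open Classical in
/-- Positive-semidefinite square root (junk value `0` off the PSD cone). -/
def psdSqrt {n : ℕ} (A : Matrix (QIdx n) (QIdx n) ℂ) : Matrix (QIdx n) (QIdx n) ℂ :=
  if h : A.PosSemidef then
    (h.1.eigenvectorUnitary : Matrix (QIdx n) (QIdx n) ℂ) * diagonal ((↑) ∘ (√·) ∘ h.1.eigenvalues) *
      (star h.1.eigenvectorUnitary : Matrix (QIdx n) (QIdx n) ℂ)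
  else 0

/-- The Uhlmann fidelity `F(ρ,σ) = (tr √(√ρ σ √ρ))²`. -/
def fidelity {n : ℕ} (ρ σ : Matrix (QIdx n) (QIdx n) ℂ) : ℝ :=
  ((psdSqrt (psdSqrt ρ * σ * psdSqrt ρ)).trace.re) ^ 2

/-- The stabilizer fidelity `D_F(ρ) = inf { -ln F(ρ,σ) : σ a mixed stabilizer state }`. -/
def DF {n : ℕ} (ρ : Matrix (QIdx n) (QIdx n) ℂ) : ℝ :=
  sInf { r | ∃ σ, IsMixedStab σ ∧ r = - Real.log (fidelity ρ σ) }

/-- Filtered Pauli moment `Ã_α(ρ) = (2^n A_α(ρ) - 1)/(2^n - 1)`. -/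
def Atil {n : ℕ} (α : ℝ) (ρ : Matrix (QIdx n) (QIdx n) ℂ) : ℝ :=
  ((2:ℝ)^n * Amom α ρ - 1) / ((2:ℝ)^n - 1)

/-- Filtered stabilizer norm `D̃(ρ) = (2^n D(ρ) - 1)/(2^n - 1)`. -/
def Dtil {n : ℕ} (ρ : Matrix (QIdx n) (QIdx n) ℂ) : ℝ :=
  ((2:ℝ)^n * Dnorm ρ - 1) / ((2:ℝ)^n - 1)

/-- Filtered magic witness `W̃_α(ρ) = (1/(1-α)) ln Ã_α(ρ) + ((1-2α)/(1-α)) ln Ã₁(ρ)`. -/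
def Wtil {n : ℕ} (α : ℝ) (ρ : Matrix (QIdx n) (QIdx n) ℂ) : ℝ :=
  (1/(1-α)) * Real.log (Atil α ρ) + ((1 - 2*α)/(1-α)) * Real.log (Atil 1 ρ)

/-- The maximally mixed state `I/2^n`. -/
def maxMixed (n : ℕ) : Matrix (QIdx n) (QIdx n) ℂ := ((2:ℂ)^n)⁻¹ • 1

/-- The single-qubit T-state vector `|T⟩ = (|0⟩ + e^{-iπ/4}|1⟩)/√2`. -/
def Tket : QIdx 1 → ℂ :=
  fun i => if i 0 = 0 then (Real.sqrt 2 : ℂ)⁻¹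
           else Complex.exp (-(Real.pi/4 : ℂ) * Complex.I) * (Real.sqrt 2 : ℂ)⁻¹

/-- The depolarized T-state `ρ_p = (1-p)|T⟩⟨T| + p·I₂/2`. -/
def rhoDep (p : ℝ) : Matrix (QIdx 1) (QIdx 1) ℂ :=
  ((1 - p : ℝ) : ℂ) • proj Tket + ((p : ℝ) : ℂ) • (((2:ℂ))⁻¹ • 1)


/- ===== auxiliary lemmas ===== -/

lemma pauli00 (c : Fin 4) : pauliMat c 0 0 = 0 ∨ pauliMat c 0 0 = 1 := by
  fin_cases c <;> simp [pauliMat, Matrix.one_apply]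

lemma pauliComp (x y z w : Fin 2) :
    ∑ c : Fin 4, pauliMat c x y * pauliMat c z w = if x = w ∧ y = z then 2 else 0 := by
  fin_cases x <;> fin_cases y <;> fin_cases z <;> fin_cases w <;>
    norm_num [pauliMat, Fin.sum_univ_four, Matrix.one_apply]

lemma pauliOrth (b c : Fin 4) :
    (∑ x : Fin 2, ∑ y : Fin 2, pauliMat b x y * pauliMat c y x) = if b = c then 2 else 0 := by
  fin_cases b <;> fin_cases c <;>
    simp [pauliMat, Fin.sum_univ_two, Matrix.one_apply] <;> ring_nf <;> simp [Complex.I_sq]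

lemma sum_fn_prod {n : ℕ} (G : Fin n → Fin 4 → ℂ) :
    ∑ a : Fin n → Fin 4, ∏ k, G k (a k) = ∏ k, ∑ c : Fin 4, G k c := by
  rw [Finset.prod_univ_sum]; simp [Fintype.piFinset_univ]

lemma sum_pair_prod {n : ℕ} (F : Fin n → Fin 2 → Fin 2 → ℂ) :
    ∑ i : QIdx n, ∑ j : QIdx n, ∏ k, F k (i k) (j k)
      = ∏ k, ∑ x : Fin 2, ∑ y : Fin 2, F k x y := by
  have h1 : ∀ k, (∑ x : Fin 2, ∑ y : Fin 2, F k x y) = ∑ p : Fin 2 × Fin 2, F k p.1 p.2 := by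
    intro k; rw [Fintype.sum_prod_type]
  simp_rw [h1]
  rw [Finset.prod_univ_sum]
  simp only [Fintype.piFinset_univ]
  rw [← Fintype.sum_prod_type']
  exact Fintype.sum_equiv (Equiv.arrowProdEquivProdArrow (Fin n) (fun _ => Fin 2) (fun _ => Fin 2)).symm _ _
    (fun p => rfl)

lemma trace_pauli_mul {n : ℕ} (a b : Fin n → Fin 4) :
    (pauliString a * pauliString b).trace = if a = b then (2:ℂ)^n else 0 := by
  have h0 : (pauliString a * pauliString b).trace
      = ∑ i : QIdx n, ∑ j : QIdx n,
          ∏ k, (pauliMat (a k) (i k) (j k) * pauliMat (b k) (j k) (i k)) := by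
    simp [Matrix.trace, Matrix.mul_apply, Matrix.diag, pauliString, Finset.prod_mul_distrib]
  rw [h0, sum_pair_prod (fun k x y => pauliMat (a k) x y * pauliMat (b k) y x)]
  have h2 : ∀ k, (∑ x : Fin 2, ∑ y : Fin 2, pauliMat (a k) x y * pauliMat (b k) y x)
      = if a k = b k then 2 else 0 := fun k => pauliOrth (a k) (b k)
  simp_rw [h2]
  by_cases h : a = b
  · subst h; simp
  · obtain ⟨k, hk⟩ := Function.ne_iff.mp h
    rw [if_neg h]
    exact Finset.prod_eq_zero (Finset.mem_univ k) (if_neg hk)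

lemma pauli_sum_entries {n : ℕ} (i j u v : QIdx n) :
    ∑ a : Fin n → Fin 4, pauliString a j i * pauliString a v u
      = if j = u ∧ i = v then (2:ℂ)^n else 0 := by
  have h0 : ∀ a : Fin n → Fin 4, pauliString a j i * pauliString a v u
      = ∏ k, (pauliMat (a k) (j k) (i k) * pauliMat (a k) (v k) (u k)) := by
    intro a; simp [pauliString, Finset.prod_mul_distrib]
  simp_rw [h0]
  rw [sum_fn_prod (fun k c => pauliMat c (j k) (i k) * pauliMat c (v k) (u k))]
  have h2 : ∀ k, (∑ c : Fin 4, pauliMat c (j k) (i k) * pauliMat c (v k) (u k))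
      = if j k = u k ∧ i k = v k then 2 else 0 := fun k => pauliComp _ _ _ _
  simp_rw [h2]
  by_cases h : j = u ∧ i = v
  · rw [if_pos h]
    have hk : ∀ k, (j k = u k ∧ i k = v k) := fun k => ⟨congrFun h.1 k, congrFun h.2 k⟩
    simp [hk]
  · rw [if_neg h]
    have hex : ∃ k, ¬(j k = u k ∧ i k = v k) := by
      by_contra hc
      push_neg at hc
      exact h ⟨funext fun k => (hc k).1, funext fun k => (hc k).2⟩
    obtain ⟨k, hk⟩ := hex
    exact Finset.prod_eq_zero (Finset.mem_univ k) (if_neg hk)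

lemma trace_pair {n : ℕ} (M N : Matrix (QIdx n) (QIdx n) ℂ) :
    (M * N).trace = ∑ p : QIdx n × QIdx n, M p.1 p.2 * N p.2 p.1 := by
  have h1 : (M * N).trace = ∑ i : QIdx n, ∑ j : QIdx n, M i j * N j i := by
    simp [Matrix.trace, Matrix.mul_apply, Matrix.diag]
  rw [h1, ← Fintype.sum_prod_type']

lemma pauli_parseval {n : ℕ} (A B : Matrix (QIdx n) (QIdx n) ℂ) :
    ∑ a : Fin n → Fin 4, (A * pauliString a).trace * (B * pauliString a).trace
      = (2:ℂ)^n * (A * B).trace := by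
  simp_rw [trace_pair, Finset.sum_mul_sum]
  rw [Finset.sum_comm]
  rw [Finset.sum_congr rfl (fun p _ => Finset.sum_comm)]
  have step : ∀ p : QIdx n × QIdx n,
      (∑ q : QIdx n × QIdx n, ∑ a : Fin n → Fin 4,
        (A p.1 p.2 * pauliString a p.2 p.1) * (B q.1 q.2 * pauliString a q.2 q.1))
      = (2:ℂ)^n * (A p.1 p.2 * B p.2 p.1) := by
    intro p
    have inner : ∀ q : QIdx n × QIdx n,
        (∑ a : Fin n → Fin 4,
          (A p.1 p.2 * pauliString a p.2 p.1) * (B q.1 q.2 * pauliString a q.2 q.1))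
        = if q = (p.2, p.1) then (A p.1 p.2 * B q.1 q.2) * (2:ℂ)^n else 0 := by
      intro q
      have hq : (∑ a : Fin n → Fin 4,
            (A p.1 p.2 * pauliString a p.2 p.1) * (B q.1 q.2 * pauliString a q.2 q.1))
          = (A p.1 p.2 * B q.1 q.2)
              * ∑ a : Fin n → Fin 4, pauliString a p.2 p.1 * pauliString a q.2 q.1 := by
        rw [Finset.mul_sum]; exact Finset.sum_congr rfl (fun a _ => by ring)
      rw [hq, pauli_sum_entries]
      have hcond : (p.2 = q.1 ∧ p.1 = q.2) ↔ q = (p.2, p.1) := by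
        constructor
        · rintro ⟨h1, h2⟩; exact Prod.ext h1.symm h2.symm
        · rintro rfl; exact ⟨rfl, rfl⟩
      rw [if_congr hcond rfl rfl, mul_ite, mul_zero]
    simp_rw [inner]
    rw [Finset.sum_ite_eq' Finset.univ (p.2, p.1) (fun q => A p.1 p.2 * B q.1 q.2 * (2:ℂ)^n)]
    simp [mul_comm]
  simp_rw [step]
  rw [← Finset.mul_sum]

lemma pauliString_zero {n : ℕ} : pauliString (fun _ => (0 : Fin 4)) = (1 : Matrix (QIdx n) (QIdx n) ℂ) := by
  funext i j
  simp only [pauliString, pauliMat]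
  by_cases h : i = j
  · subst h; simp [Matrix.one_apply]
  · obtain ⟨k, hk⟩ := Function.ne_iff.mp h
    rw [Matrix.one_apply_ne h]
    exact Finset.prod_eq_zero (Finset.mem_univ k) (Matrix.one_apply_ne hk)

lemma zeroVec_eq {n : ℕ} :
    zeroVec n = fun i => if i = (fun _ => 0 : QIdx n) then 1 else 0 := by
  funext i
  by_cases h : ∀ k, i k = 0
  · rw [zeroVec, if_pos h, if_pos (funext h)]
  · rw [zeroVec, if_neg h, if_neg (fun hz => h fun k => congrFun hz k)]

lemma dot_zero {n : ℕ} (M : Matrix (QIdx n) (QIdx n) ℂ) :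
    zeroVec n ⬝ᵥ M *ᵥ zeroVec n = M (fun _ => 0) (fun _ => 0) := by
  rw [zeroVec_eq]
  simp [dotProduct, Matrix.mulVec, ite_mul, mul_ite]

lemma star_zeroVec {n : ℕ} : star (zeroVec n) = zeroVec n := by
  funext i
  simp [zeroVec, apply_ite (star : ℂ → ℂ)]

lemma quad_form {n : ℕ} {U : Matrix (QIdx n) (QIdx n) ℂ} (M : Matrix (QIdx n) (QIdx n) ℂ) :
    star (U *ᵥ zeroVec n) ⬝ᵥ M *ᵥ (U *ᵥ zeroVec n)
      = (Uᴴ * M * U) (fun _ => 0) (fun _ => 0) := by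
  rw [Matrix.star_mulVec, Matrix.mulVec_mulVec, Matrix.dotProduct_mulVec,
    Matrix.vecMul_vecMul, ← Matrix.dotProduct_mulVec, star_zeroVec, ← Matrix.mul_assoc,
    dot_zero]

lemma clifford_inv {n : ℕ} {U : Matrix (QIdx n) (QIdx n) ℂ} (hU : IsCliffordUnitary U) :
    ∀ a : Fin n → Fin 4, ∃ (b : Fin n → Fin 4) (ε : ℝ),
      (ε = 1 ∨ ε = -1) ∧ Uᴴ * pauliString a * U = (ε : ℂ) • pauliString b := by
  obtain ⟨hUu, hcl⟩ := hU
  have hmem := (Unitary.mem_iff).mp hUu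
  have hU1 : Uᴴ * U = 1 := by rw [← Matrix.star_eq_conjTranspose]; exact hmem.1
  have hU2 : U * Uᴴ = 1 := by rw [← Matrix.star_eq_conjTranspose]; exact hmem.2
  choose f ε hsign heq using hcl
  have hinj : Function.Injective f := by
    intro a a' hff
    have key : ((U * pauliString a * Uᴴ) * (U * pauliString a' * Uᴴ)).trace
        = (pauliString a * pauliString a').trace := by
      have : (U * pauliString a * Uᴴ) * (U * pauliString a' * Uᴴ)
          = U * (pauliString a * pauliString a') * Uᴴ := by
        calc (U * pauliString a * Uᴴ) * (U * pauliString a' * Uᴴ)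
            = U * pauliString a * (Uᴴ * U) * pauliString a' * Uᴴ := by
              simp only [Matrix.mul_assoc]
          _ = U * (pauliString a * pauliString a') * Uᴴ := by
              rw [hU1]; simp only [Matrix.mul_assoc, Matrix.one_mul]
      rw [this, Matrix.trace_mul_comm, ← Matrix.mul_assoc, hU1, Matrix.one_mul]
    rw [heq a, heq a', hff] at key
    rw [Matrix.smul_mul, Matrix.mul_smul, Matrix.trace_smul, Matrix.trace_smul,
      trace_pauli_mul, trace_pauli_mul] at key
    by_contra hne
    rw [if_pos rfl, if_neg hne] at key
    have h2 : ((2:ℂ))^n ≠ 0 := pow_ne_zero _ two_ne_zero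
    have hε : (ε a : ℂ) ≠ 0 := by
      rcases hsign a with h | h <;> rw [h] <;> norm_num
    have hε' : (ε a' : ℂ) ≠ 0 := by
      rcases hsign a' with h | h <;> rw [h] <;> norm_num
    simp only [smul_eq_mul] at key
    exact h2 (by
      have := key.symm
      field_simp at this
      exact absurd this.symm (mul_ne_zero (mul_ne_zero hε hε') h2))
  have hsurj : Function.Surjective f := Finite.surjective_of_injective hinj
  intro a
  obtain ⟨a', ha'⟩ := hsurj a
  refine ⟨a', ε a', hsign a', ?_⟩
  have h0 := heq a'
  rw [ha'] at h0
  have : Uᴴ * (U * pauliString a' * Uᴴ) * U = pauliString a' := by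
    calc Uᴴ * (U * pauliString a' * Uᴴ) * U
        = (Uᴴ * U) * pauliString a' * (Uᴴ * U) := by simp only [Matrix.mul_assoc]
      _ = pauliString a' := by rw [hU1]; simp
  rw [h0] at this
  rw [Matrix.mul_smul, Matrix.smul_mul] at this
  have hsq : (ε a' : ℂ) * (ε a' : ℂ) = 1 := by
    rcases hsign a' with h | h <;> rw [h] <;> norm_num
  calc Uᴴ * pauliString a * U
      = (ε a' : ℂ) • ((ε a' : ℂ) • (Uᴴ * pauliString a * U)) := by
        rw [smul_smul, hsq, one_smul]
    _ = (ε a' : ℂ) • pauliString a' := by rw [this]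

lemma proj_mul_trace {n : ℕ} (ψ : QIdx n → ℂ) (M : Matrix (QIdx n) (QIdx n) ℂ) :
    (proj ψ * M).trace = star ψ ⬝ᵥ M *ᵥ ψ := by
  simp only [proj, Matrix.trace, Matrix.diag, Matrix.mul_apply, Matrix.vecMulVec_apply,
    dotProduct, Matrix.mulVec, Pi.star_apply]
  rw [Finset.sum_comm]
  exact Finset.sum_congr rfl fun j _ => by
    rw [Finset.mul_sum]
    exact Finset.sum_congr rfl fun i _ => by ring

lemma proj_trace {n : ℕ} (ψ : QIdx n → ℂ) : (proj ψ).trace = star ψ ⬝ᵥ ψ := by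
  simp only [proj, Matrix.trace, Matrix.diag, Matrix.vecMulVec_apply, dotProduct,
    Pi.star_apply]
  exact Finset.sum_congr rfl fun i _ => by ring

lemma proj_sq {n : ℕ} (ψ : QIdx n → ℂ) :
    proj ψ * proj ψ = (star ψ ⬝ᵥ ψ) • proj ψ := by
  funext i j
  simp only [proj, Matrix.mul_apply, Matrix.vecMulVec_apply, Matrix.smul_apply,
    dotProduct, Pi.star_apply, smul_eq_mul, Finset.sum_mul, Finset.mul_sum]
  exact Finset.sum_congr rfl fun k _ => by ring

lemma stab_norm_one {n : ℕ} {ψ : QIdx n → ℂ} (h : IsPureStab ψ) :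
    star ψ ⬝ᵥ ψ = 1 := by
  obtain ⟨U, hU, rfl⟩ := h
  have hmem := (Unitary.mem_iff).mp hU.1
  have hU1 : Uᴴ * U = 1 := by rw [← Matrix.star_eq_conjTranspose]; exact hmem.1
  have h1 := quad_form (U := U) (1 : Matrix (QIdx n) (QIdx n) ℂ)
  rw [Matrix.one_mulVec, Matrix.mul_one, hU1] at h1
  rw [h1, Matrix.one_apply_eq]

lemma stab_trace_vals {n : ℕ} {ψ : QIdx n → ℂ} (h : IsPureStab ψ) (a : Fin n → Fin 4) :
    (proj ψ * pauliString a).trace = 0 ∨ (proj ψ * pauliString a).trace = 1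
      ∨ (proj ψ * pauliString a).trace = -1 := by
  obtain ⟨U, hU, rfl⟩ := h
  obtain ⟨b, ε, hsign, heq⟩ := clifford_inv hU a
  rw [proj_mul_trace, quad_form, heq]
  have hP : pauliString b (fun _ => (0:Fin 2)) (fun _ => (0:Fin 2)) = 0
      ∨ pauliString b (fun _ => (0:Fin 2)) (fun _ => (0:Fin 2)) = 1 := by
    simp only [pauliString]
    by_cases hall : ∀ k, pauliMat (b k) 0 0 = 1
    · right; exact Finset.prod_eq_one fun k _ => hall k
    · left
      push_neg at hall
      obtain ⟨k, hk⟩ := hall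
      refine Finset.prod_eq_zero (Finset.mem_univ k) ?_
      rcases pauli00 (b k) with h0 | h1
      · exact h0
      · exact absurd h1 hk
  simp only [Matrix.smul_apply, smul_eq_mul]
  rcases hP with h0 | h1
  · left; rw [h0, mul_zero]
  · rcases hsign with hε | hε
    · right; left; rw [h1, hε, mul_one]; norm_num
    · right; right; rw [h1, hε, mul_one]; norm_num

lemma stab_abs_sum {n : ℕ} {ψ : QIdx n → ℂ} (h : IsPureStab ψ) :
    ∑ a : Fin n → Fin 4, ‖(proj ψ * pauliString a).trace‖ = 2^n := by
  have hpar := pauli_parseval (proj ψ) (proj ψ)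
  rw [proj_sq, Matrix.trace_smul, proj_trace, stab_norm_one h] at hpar
  norm_num at hpar
  have habs : ∀ a : Fin n → Fin 4,
      (‖(proj ψ * pauliString a).trace‖ : ℂ)
        = (proj ψ * pauliString a).trace * (proj ψ * pauliString a).trace := by
    intro a
    rcases stab_trace_vals h a with h0 | h1 | hm1
    · rw [h0]; simp
    · rw [h1]; simp
    · rw [hm1]; simp
  have : (↑(∑ a : Fin n → Fin 4, ‖(proj ψ * pauliString a).trace‖) : ℂ)
      = (2:ℂ)^n := by
    push_cast
    rw [Finset.sum_congr rfl fun a _ => habs a, hpar]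
  exact_mod_cast this

lemma stab_proj_trace_one {n : ℕ} {ψ : QIdx n → ℂ} (h : IsPureStab ψ) :
    (proj ψ).trace = 1 := by rw [proj_trace, stab_norm_one h]

lemma stab_abs_sum_erase {n : ℕ} {ψ : QIdx n → ℂ} (h : IsPureStab ψ) :
    ∑ a ∈ Finset.univ.erase (fun _ => (0:Fin 4)),
      ‖(proj ψ * pauliString a).trace‖ = 2^n - 1 := by
  have htot := stab_abs_sum h
  have hz : ‖(proj ψ * pauliString (fun _ => (0:Fin 4))).trace‖ = 1 := by
    rw [pauliString_zero, Matrix.mul_one, stab_proj_trace_one h]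
    simp
  have := Finset.add_sum_erase Finset.univ
    (fun a => ‖(proj ψ * pauliString a).trace‖)
    (Finset.mem_univ (fun _ => (0:Fin 4)))
  rw [hz, htot] at this
  linarith

/-- the log of the filtered stabilizer norm lower-bounds the
log-free robustness of magic: `ln D̃(ρ) ≤ LR(ρ)`. -/
theorem log_filtered_stabNorm_le_LR {n : ℕ} (ρ : Matrix (QIdx n) (QIdx n) ℂ)
    (hρ : IsState ρ) (hne : ρ ≠ maxMixed n) (hdec : (StabDecomps ρ).Nonempty) :
    Real.log (Dtil ρ) ≤ LR ρ := by
  apply le_csInf hdec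
  rintro r ⟨k, x, ψ, hstab, hdecomp, rfl⟩
  have htrρ : ρ.trace = 1 := hρ.2
  have hsum1 : ∑ i, x i = 1 := by
    have h0 : ρ.trace = ∑ i, (x i : ℂ) := by
      rw [hdecomp, Matrix.trace_sum]
      exact Finset.sum_congr rfl fun i _ => by
        rw [Matrix.trace_smul, stab_proj_trace_one (hstab i), smul_eq_mul, mul_one]
    rw [htrρ] at h0
    exact_mod_cast h0.symm
  have hS1 : (1:ℝ) ≤ ∑ i, |x i| := by
    calc (1:ℝ) = |∑ i, x i| := by rw [hsum1]; norm_num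
    _ ≤ ∑ i, |x i| := Finset.abs_sum_le_sum_abs _ _
  have hlogS : 0 ≤ Real.log (∑ i, |x i|) := Real.log_nonneg hS1
  have htr : ∀ a : Fin n → Fin 4, (ρ * pauliString a).trace
      = ∑ i, (x i : ℂ) * (proj (ψ i) * pauliString a).trace := by
    intro a
    rw [hdecomp, Finset.sum_mul, Matrix.trace_sum]
    exact Finset.sum_congr rfl fun i _ => by
      rw [Matrix.smul_mul, Matrix.trace_smul, smul_eq_mul]
  set z4 : Fin n → Fin 4 := fun _ => 0 with hz4
  have hbound : ∑ a ∈ Finset.univ.erase z4, ‖(ρ * pauliString a).trace‖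
      ≤ (∑ i, |x i|) * ((2:ℝ)^n - 1) := by
    have h1 : ∀ a : Fin n → Fin 4, ‖(ρ * pauliString a).trace‖
        ≤ ∑ i, |x i| * ‖(proj (ψ i) * pauliString a).trace‖ := by
      intro a
      rw [htr a]
      refine le_trans (norm_sum_le _ _) ?_
      refine le_of_eq (Finset.sum_congr rfl fun i _ => ?_)
      rw [norm_mul, Complex.norm_real, Real.norm_eq_abs]
    calc ∑ a ∈ Finset.univ.erase z4, ‖(ρ * pauliString a).trace‖
        ≤ ∑ a ∈ Finset.univ.erase z4,
            ∑ i, |x i| * ‖(proj (ψ i) * pauliString a).trace‖ :=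
          Finset.sum_le_sum fun a _ => h1 a
      _ = ∑ i, |x i| * ∑ a ∈ Finset.univ.erase z4,
            ‖(proj (ψ i) * pauliString a).trace‖ := by
          rw [Finset.sum_comm]
          exact Finset.sum_congr rfl fun i _ => (Finset.mul_sum _ _ _).symm
      _ = ∑ i, |x i| * ((2:ℝ)^n - 1) := by
          exact Finset.sum_congr rfl fun i _ => by rw [stab_abs_sum_erase (hstab i)]
      _ = (∑ i, |x i|) * ((2:ℝ)^n - 1) := by rw [← Finset.sum_mul]
  have h2n : ((2:ℝ))^n ≠ 0 := by positivity
  have hz4tr : (ρ * pauliString z4).trace = 1 := by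
    rw [hz4, pauliString_zero, Matrix.mul_one, htrρ]
  have hD : Dnorm ρ = ((2:ℝ)^n)⁻¹ * ∑ a : Fin n → Fin 4,
      ‖(ρ * pauliString a).trace‖ := by
    unfold Dnorm Amom
    congr 1
    refine Finset.sum_congr rfl fun a _ => ?_
    norm_num
  have hNum : (2:ℝ)^n * Dnorm ρ - 1
      = ∑ a ∈ Finset.univ.erase z4, ‖(ρ * pauliString a).trace‖ := by
    rw [hD, ← mul_assoc, mul_inv_cancel₀ h2n, one_mul,
      ← Finset.add_sum_erase Finset.univ _ (Finset.mem_univ z4), hz4tr]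
    simp
  have hNumNonneg : 0 ≤ (2:ℝ)^n * Dnorm ρ - 1 := by
    rw [hNum]
    exact Finset.sum_nonneg fun a _ => norm_nonneg _
  rcases Nat.eq_zero_or_pos n with hn | hn
  · subst hn
    have hd0 : Dtil ρ = 0 := by
      unfold Dtil
      norm_num
    rw [hd0, Real.log_zero]
    exact hlogS
  · have hden : 0 < (2:ℝ)^n - 1 := by
      have : (1:ℝ) < 2^n := one_lt_pow₀ (by norm_num) hn.ne'
      linarith
    have hDle : Dtil ρ ≤ ∑ i, |x i| := by
      unfold Dtil
      rw [div_le_iff₀ hden, hNum]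
      exact hbound
    have hDnonneg : 0 ≤ Dtil ρ := div_nonneg hNumNonneg hden.le
    by_cases hD1 : Dtil ρ ≤ 1
    · exact le_trans (Real.log_nonpos hDnonneg hD1) hlogS
    · push_neg at hD1
      exact Real.log_le_log (by linarith) hDle

end
end

section
/- For the depolarized single-qubit T-state ρ_p = (1−p)|T⟩⟨T| + p·I₂/2 with 0 ≤ p < 1, the filtered magic witness is independent of the Rényi index: for every real α ≥ 1/2 with α ≠ 1, W̃_α(ρ_p) = ln(2(1−p)²). -/
open Matrix Complex BigOperators
open scoped ComplexOrder

noncomputable section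

lemma sum_qidx1 (f : QIdx 1 → ℂ) : ∑ i, f i = f (fun _ => 0) + f (fun _ => 1) := by
  rw [← (Equiv.funUnique (Fin 1) (Fin 2)).symm.sum_comp]
  simp [Equiv.funUnique, Fin.sum_univ_two]
  rfl
lemma pauliString_one (a : Fin 1 → Fin 4) (i j : QIdx 1) :
    pauliString a i j = pauliMat (a 0) (i 0) (j 0) := by
  simp [pauliString, Fin.prod_univ_one]
lemma trace_qidx1 (M : Matrix (QIdx 1) (QIdx 1) ℂ) :
    M.trace = M (fun _ => 0) (fun _ => 0) + M (fun _ => 1) (fun _ => 1) := by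
  rw [Matrix.trace]; exact sum_qidx1 _
lemma mul_entry_qidx1 (A B : Matrix (QIdx 1) (QIdx 1) ℂ) (i j : QIdx 1) :
    (A * B) i j = A i (fun _ => 0) * B (fun _ => 0) j + A i (fun _ => 1) * B (fun _ => 1) j := by
  rw [Matrix.mul_apply]; exact sum_qidx1 _
lemma eT : Complex.exp (-(Real.pi/4 : ℂ) * Complex.I)
    = ((Real.sqrt 2 / 2 : ℝ) : ℂ) * (1 - Complex.I) := by
  have h : (-(Real.pi/4 : ℂ)) = ((-(Real.pi/4) : ℝ) : ℂ) := by push_cast; ring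
  rw [h, Complex.exp_mul_I, ← Complex.ofReal_cos, ← Complex.ofReal_sin,
    Real.cos_neg, Real.sin_neg, Real.cos_pi_div_four, Real.sin_pi_div_four]
  push_cast; ring
lemma sqrt2_ne : (Real.sqrt 2 : ℂ) ≠ 0 := by
  simp [Real.sqrt_eq_zero']
lemma sqrt2_sq : (Real.sqrt 2 : ℂ) * (Real.sqrt 2 : ℂ) = 2 := by
  rw [← Complex.ofReal_mul, Real.mul_self_sqrt (by norm_num : (0:ℝ) ≤ 2)]
  norm_num

lemma sqrt2_inv : (Real.sqrt 2 : ℂ)⁻¹ = (Real.sqrt 2 : ℂ)/2 := by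
  field_simp
  linear_combination -sqrt2_sq

lemma tr_a1 (p : ℝ) : (rhoDep p * pauliString (fun _ => (1:Fin 4))).trace
    = (((1 - p) / Real.sqrt 2 : ℝ) : ℂ) := by
  rw [trace_qidx1, mul_entry_qidx1, mul_entry_qidx1]
  simp only [pauliString_one, pauliMat, rhoDep, proj, Matrix.vecMulVec_apply,
    Matrix.add_apply, Matrix.smul_apply, Matrix.one_apply, Tket, Pi.star_apply, eT,
    funext_iff, Fin.forall_fin_one]
  simp [funext_iff, Fin.forall_fin_one]
  field_simp [sqrt2_ne]
  ring
lemma tr_a0 (p : ℝ) : (rhoDep p * pauliString (fun _ => (0:Fin 4))).trace = 1 := by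
  rw [trace_qidx1, mul_entry_qidx1, mul_entry_qidx1]
  simp only [pauliString_one, pauliMat, rhoDep, proj, Matrix.vecMulVec_apply,
    Matrix.add_apply, Matrix.smul_apply, Matrix.one_apply, Tket, Pi.star_apply, eT]
  simp [funext_iff, Fin.forall_fin_one]
  simp only [sqrt2_inv]
  field_simp
  have h2 : (Real.sqrt 2 : ℂ)^2 = 2 := by rw [sq]; exact sqrt2_sq
  have h4 : (Real.sqrt 2 : ℂ)^4 = 4 := by rw [show (Real.sqrt 2 : ℂ)^4 = ((Real.sqrt 2 : ℂ)^2)^2 by ring, h2]; norm_num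
  simp only [h4, h2]
  linear_combination (-4*(1-(p:ℂ)))*Complex.I_sq

lemma tr_a2 (p : ℝ) : (rhoDep p * pauliString (fun _ => (2:Fin 4))).trace = 0 := by
  rw [trace_qidx1, mul_entry_qidx1, mul_entry_qidx1]
  simp only [pauliString_one, pauliMat, rhoDep, proj, Matrix.vecMulVec_apply,
    Matrix.add_apply, Matrix.smul_apply, Matrix.one_apply, Tket, Pi.star_apply, eT]
  simp [funext_iff, Fin.forall_fin_one]
  simp only [sqrt2_inv]
  field_simp
  have h2 : (Real.sqrt 2 : ℂ)^2 = 2 := by rw [sq]; exact sqrt2_sq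
  have h4 : (Real.sqrt 2 : ℂ)^4 = 4 := by rw [show (Real.sqrt 2 : ℂ)^4 = ((Real.sqrt 2 : ℂ)^2)^2 by ring, h2]; norm_num
  simp only [h4, h2]
  linear_combination (4*(1-(p:ℂ)))*Complex.I_sq

lemma tr_a3 (p : ℝ) : (rhoDep p * pauliString (fun _ => (3:Fin 4))).trace
    = -(((1 - p) / Real.sqrt 2 : ℝ) : ℂ) := by
  rw [trace_qidx1, mul_entry_qidx1, mul_entry_qidx1]
  simp only [pauliString_one, pauliMat, rhoDep, proj, Matrix.vecMulVec_apply,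
    Matrix.add_apply, Matrix.smul_apply, Matrix.one_apply, Tket, Pi.star_apply, eT]
  simp [funext_iff, Fin.forall_fin_one]
  simp only [sqrt2_inv]
  field_simp
  have h2 : (Real.sqrt 2 : ℂ)^2 = 2 := by rw [sq]; exact sqrt2_sq
  have h4 : (Real.sqrt 2 : ℂ)^4 = 4 := by rw [show (Real.sqrt 2 : ℂ)^4 = ((Real.sqrt 2 : ℂ)^2)^2 by ring, h2]; norm_num
  simp only [h4, h2]
  linear_combination (8*(1-(p:ℂ)))*Complex.I_sq

lemma sum_fn4 (f : (Fin 1 → Fin 4) → ℝ) :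
    ∑ a, f a = f (fun _ => 0) + f (fun _ => 1) + f (fun _ => 2) + f (fun _ => 3) := by
  rw [← (Equiv.funUnique (Fin 1) (Fin 4)).symm.sum_comp]
  simp [Equiv.funUnique, Fin.sum_univ_four]
  rfl

lemma Amom_rhoDep (p α : ℝ) (hp1 : p ≤ 1) (hα : α ≠ 0) :
    Amom α (rhoDep p) = 2⁻¹ * (1 + 2 * ((1-p)/Real.sqrt 2) ^ (2*α)) := by
  rw [Amom, sum_fn4 (fun a => ‖(rhoDep p * pauliString a).trace‖ ^ (2 * α)),
    tr_a0, tr_a1, tr_a2, tr_a3]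
  have hq : (0:ℝ) ≤ (1-p)/Real.sqrt 2 := div_nonneg (by linarith) (Real.sqrt_nonneg 2)
  have h2α : (2*α) ≠ 0 := by positivity
  simp only [norm_neg, Complex.norm_real, Real.norm_eq_abs, norm_one, norm_zero,
    _root_.abs_of_nonneg hq, Real.zero_rpow h2α, Real.one_rpow]
  ring
lemma Atil_rhoDep (p α : ℝ) (hp1 : p ≤ 1) (hα : α ≠ 0) :
    Atil α (rhoDep p) = 2 * (((1-p)^2/2) ^ α) := by
  have hq : (0:ℝ) ≤ (1-p)/Real.sqrt 2 := div_nonneg (by linarith) (Real.sqrt_nonneg 2)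
  have key : ((1-p)/Real.sqrt 2) ^ (2*α) = ((1-p)^2/2) ^ α := by
    rw [Real.rpow_mul hq 2 α]
    congr 1
    have h2 : ((1-p)/Real.sqrt 2 : ℝ) ^ (2:ℝ) = ((1-p)/Real.sqrt 2) ^ (2:ℕ) := by
      rw [← Real.rpow_natCast]; norm_num
    rw [h2, div_pow, Real.sq_sqrt (by norm_num : (0:ℝ) ≤ 2)]
  rw [Atil, Amom_rhoDep p α hp1 hα, key]
  norm_num
  ring

/-- for the depolarized T-state `ρ_p = (1-p)|T⟩⟨T| + p I₂/2`,
`0 ≤ p < 1`, the filtered witness is independent of the Rényi index: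
`W̃_α(ρ_p) = ln (2(1-p)²)` for all `α ≥ 1/2`, `α ≠ 1`. -/
theorem filtered_witness_depolarized_T (p : ℝ) (hp0 : 0 ≤ p) (hp1 : p < 1)
    (α : ℝ) (hα : (1:ℝ)/2 ≤ α) (hα1 : α ≠ 1) :
    Wtil α (rhoDep p) = Real.log (2 * (1 - p)^2) := by
  have hα0 : α ≠ 0 := by intro h; rw [h] at hα; norm_num at hα
  have hc : (0:ℝ) < (1-p)^2/2 := by
    have : (0:ℝ) < 1 - p := by linarith
    positivity
  have h2p : ((1:ℝ)-p)^2 ≠ 0 := by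
    have : (0:ℝ) < 1 - p := by linarith
    positivity
  have h1α : (1:ℝ) - α ≠ 0 := sub_ne_zero_of_ne (Ne.symm hα1)
  have hA1 : Atil 1 (rhoDep p) = (1-p)^2 := by
    rw [Atil_rhoDep p 1 hp1.le one_ne_zero, Real.rpow_one]; ring
  have e1 : Real.log (((1:ℝ)-p)^2) = Real.log 2 + Real.log ((1-p)^2/2) := by
    rw [← Real.log_mul two_ne_zero hc.ne']
    congr 1; ring
  have e2 : Real.log (2 * ((1:ℝ) - p)^2) =
      Real.log 2 + Real.log (((1:ℝ)-p)^2) := Real.log_mul two_ne_zero h2p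
  rw [Wtil, Atil_rhoDep p α hp1.le hα0, hA1,
    Real.log_mul two_ne_zero (Real.rpow_pos_of_pos hc α).ne', Real.log_rpow hc,
    e1, e2, e1]
  field_simp
  ring

end
end
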